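/- Let n ≥ 1 and let x₁,…,x_n be real numbers, and define the empirical characteristic function φ̂(v) = (1/n)∑ₜ e^{ivxₜ}. Then (1/π) ∫_ℝ (1 − |φ̂(v)|²)/v² dv = (1/n²) ∑_{t=1}^n ∑_{s=1}^n |xₜ − x_s|. -/

import Mathlib

open MeasureTheory Set Filter Topology Real

-- ∫_0^∞ e^{-tv} dv = 1/t
lemma lexp_val {t : ℝ} (ht : 0 < t) : ∫ v in Ioi (0:ℝ), Real.exp (-(t*v)) = 1/t := by
  rw [integral_comp_mul_left_Ioi (fun x => Real.exp (-x)) 0 ht]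
  simp only [mul_zero, integral_exp_neg_Ioi_zero, smul_eq_mul, mul_one, one_div]

lemma lcosexp_int (a : ℝ) {t : ℝ} (ht : 0 < t) :
    IntegrableOn (fun v => Real.exp (-(t*v)) * Real.cos (a*v)) (Ioi (0:ℝ)) := by
  refine (exp_neg_integrableOn_Ioi 0 ht).mono' ?_ ?_
  · exact (Real.continuous_exp.comp (by continuity)).mul
      (Real.continuous_cos.comp (by continuity)) |>.aestronglyMeasurable
  · filter_upwards with v
    rw [Real.norm_eq_abs, abs_mul, abs_of_pos (Real.exp_pos _)]
    rw [neg_mul]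
    calc Real.exp (-(t*v)) * |Real.cos (a*v)| ≤ Real.exp (-(t*v)) * 1 :=
          mul_le_mul_of_nonneg_left (Real.abs_cos_le_one _) (Real.exp_pos _).le
      _ = Real.exp (-(t*v)) := mul_one _

lemma lcosexp_val (a : ℝ) {t : ℝ} (ht : 0 < t) :
    ∫ v in Ioi (0:ℝ), Real.exp (-(t*v)) * Real.cos (a*v) = t/(t^2+a^2) := by
  have hD : (0:ℝ) < t^2+a^2 := by positivity
  set f : ℝ → ℝ := fun v =>
    Real.exp (-(t*v)) * ((a * Real.sin (a*v) - t * Real.cos (a*v)) / (t^2+a^2)) with hf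
  have hderiv : ∀ v ∈ Ici (0:ℝ),
      HasDerivAt f (Real.exp (-(t*v)) * Real.cos (a*v)) v := by
    intro v _
    have h1 : HasDerivAt (fun v : ℝ => Real.exp (-(t*v))) (-t * Real.exp (-(t*v))) v := by
      have : HasDerivAt (fun v : ℝ => -(t*v)) (-t) v := by
        simpa [Pi.neg_def] using ((hasDerivAt_id v).const_mul t).neg
      simpa [mul_comm] using this.exp
    have h2 : HasDerivAt (fun v : ℝ => (a * Real.sin (a*v) - t * Real.cos (a*v)) / (t^2+a^2))
        ((a * (a * Real.cos (a*v)) + t * (a * Real.sin (a*v))) / (t^2+a^2)) v := by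
      have hs : HasDerivAt (fun v : ℝ => Real.sin (a*v)) (a * Real.cos (a*v)) v := by
        have : HasDerivAt (fun v : ℝ => a*v) a v := by simpa using (hasDerivAt_id v).const_mul a
        simpa [mul_comm] using this.sin
      have hc : HasDerivAt (fun v : ℝ => Real.cos (a*v)) (-(a * Real.sin (a*v))) v := by
        have : HasDerivAt (fun v : ℝ => a*v) a v := by simpa using (hasDerivAt_id v).const_mul a
        simpa [mul_comm] using this.cos
      have := ((hs.const_mul a).sub (hc.const_mul t)).div_const (t^2+a^2)
      exact this.congr_deriv (by ring)
    have := h1.mul h2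
    exact this.congr_deriv (by field_simp; ring)
  have htend : Tendsto f atTop (𝓝 0) := by
    apply squeeze_zero_norm (a := fun v => ((|a| + t) / (t^2+a^2)) * Real.exp (-(t*v)))
    · intro v
      rw [hf]
      rw [Real.norm_eq_abs, abs_mul, abs_of_pos (Real.exp_pos _), abs_div,
        abs_of_pos hD, mul_comm]
      gcongr
      calc |a * Real.sin (a*v) - t * Real.cos (a*v)|
          ≤ |a * Real.sin (a*v)| + |t * Real.cos (a*v)| := abs_sub _ _
        _ ≤ |a| * 1 + |t| * 1 := by
            rw [abs_mul, abs_mul]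
            gcongr
            · exact Real.abs_sin_le_one _
            · exact Real.abs_cos_le_one _
        _ = |a| + t := by rw [mul_one, mul_one, abs_of_pos ht]
    · have h1 : Tendsto (fun v : ℝ => -(t*v)) atTop atBot := by
        apply tendsto_neg_atBot_iff.mpr
        exact Tendsto.const_mul_atTop ht tendsto_id
      have h2 : Tendsto (fun v : ℝ => Real.exp (-(t*v))) atTop (𝓝 0) :=
        Real.tendsto_exp_atBot.comp h1
      simpa using h2.const_mul ((|a| + t) / (t^2+a^2))
  have := integral_Ioi_of_hasDerivAt_of_tendsto' hderiv (lcosexp_int a ht) htend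
  rw [this, hf]
  simp
  field_simp

-- ∫_0^∞ s e^{-bs} ds = 1/b²
lemma ltexp_int {b : ℝ} (hb : 0 < b) :
    IntegrableOn (fun s : ℝ => s * Real.exp (-(b*s))) (Ioi (0:ℝ)) := by
  have := integrableOn_rpow_mul_exp_neg_mul_rpow (p := 1) (s := 1) (b := b)
    (by norm_num) (by norm_num) hb
  refine this.congr_fun (fun s hs => ?_) measurableSet_Ioi
  simp [Real.rpow_one]

lemma ltexp_val {b : ℝ} (hb : 0 < b) :
    ∫ s in Ioi (0:ℝ), s * Real.exp (-(b*s)) = 1/b^2 := by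
  have h := integral_rpow_mul_exp_neg_mul_Ioi (a := 2) (r := b) (by norm_num) hb
  have h2 : ∀ s ∈ Ioi (0:ℝ), s ^ ((2:ℝ)-1) * Real.exp (-(b*s)) = s * Real.exp (-(b*s)) := by
    intro s _
    norm_num
  rw [setIntegral_congr_fun measurableSet_Ioi h2] at h
  have h3 : ((1:ℝ)/b) ^ (2:ℝ) = 1/b^2 := by
    rw [show (2:ℝ) = ((2:ℕ):ℝ) by norm_num, Real.rpow_natCast, div_pow, one_pow]
  rw [h, Real.Gamma_two, mul_one, h3]

-- integrability of even extensions
lemma lint_comp_abs {f : ℝ → ℝ} (hf : IntegrableOn f (Ioi (0:ℝ))) :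
    Integrable (fun x : ℝ => f |x|) := by
  have hIoi : IntegrableOn (fun x : ℝ => f |x|) (Ioi 0) :=
    hf.congr_fun (fun x hx => by rw [abs_of_pos hx]) measurableSet_Ioi
  have hIic : IntegrableOn (fun x : ℝ => f |x|) (Iic 0) := by
    rw [← Measure.map_neg_eq_self (volume : Measure ℝ)]
    have m : MeasurableEmbedding fun x : ℝ => -x :=
      (Homeomorph.neg ℝ).measurableEmbedding
    rw [m.integrableOn_map_iff]
    simp_rw [Function.comp_def, abs_neg, neg_preimage, neg_Iic, neg_zero]
    exact (integrableOn_Ici_iff_integrableOn_Ioi).mpr hIoi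
  have := hIic.union hIoi
  rwa [Iic_union_Ioi, integrableOn_univ] at this

lemma labs_eq (a t : ℝ) : ∀ v : ℝ,
    (fun u => (1 - Real.cos (a*u)) * Real.exp (-(t*u))) |v|
      = (1 - Real.cos (a*v)) * Real.exp (-(t*|v|)) := by
  intro v
  rcases abs_choice v with h | h
  · rw [h]
  · rw [h]
    simp [mul_neg, Real.cos_neg]

lemma linner_on (a : ℝ) {t : ℝ} (ht : 0 < t) :
    IntegrableOn (fun u : ℝ => (1 - Real.cos (a*u)) * Real.exp (-(t*u))) (Ioi (0:ℝ)) := by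
  have h1 : IntegrableOn (fun u : ℝ => Real.exp (-(t*u))) (Ioi 0) := by
    have := exp_neg_integrableOn_Ioi (0:ℝ) ht
    exact this.congr_fun (fun u _ => by simp only [neg_mul]) measurableSet_Ioi
  have := h1.sub (lcosexp_int a ht)
  refine this.congr (Filter.Eventually.of_forall fun u => ?_)
  simp [Pi.sub_apply]
  ring

lemma linner_int (a : ℝ) {t : ℝ} (ht : 0 < t) :
    Integrable (fun v : ℝ => (1 - Real.cos (a*v)) * Real.exp (-(t*|v|))) := by
  have := lint_comp_abs (linner_on a ht)
  exact this.congr (Filter.Eventually.of_forall fun v => labs_eq a t v)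

lemma linner_val (a : ℝ) {t : ℝ} (ht : 0 < t) :
    ∫ v : ℝ, (1 - Real.cos (a*v)) * Real.exp (-(t*|v|))
      = 2 * (1/t - t/(t^2+a^2)) := by
  set g : ℝ → ℝ := fun u => (1 - Real.cos (a*u)) * Real.exp (-(t*u)) with hg
  have h0 : ∫ v : ℝ, (1 - Real.cos (a*v)) * Real.exp (-(t*|v|))
      = ∫ v : ℝ, g |v| := by
    exact integral_congr_ae (Filter.Eventually.of_forall fun v => (labs_eq a t v).symm)
  have habs : (∫ v : ℝ, g |v|) = 2 * ∫ v in Ioi (0:ℝ), g v := integral_comp_abs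
  rw [h0, habs, hg]
  have h1 : IntegrableOn (fun u : ℝ => Real.exp (-(t*u))) (Ioi 0) := by
    have := exp_neg_integrableOn_Ioi (0:ℝ) ht
    exact this.congr_fun (fun u _ => by simp only [neg_mul]) measurableSet_Ioi
  have hsub : ∀ u ∈ Ioi (0:ℝ), (1 - Real.cos (a*u)) * Real.exp (-(t*u))
      = Real.exp (-(t*u)) - Real.exp (-(t*u)) * Real.cos (a*u) := fun u _ => by ring
  rw [setIntegral_congr_fun measurableSet_Ioi hsub,
    integral_sub h1 (lcosexp_int a ht), lexp_val ht, lcosexp_val a ht]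

lemma ltexp2 {b : ℝ} (hb : 0 < b) :
    ∫⁻ t in Ioi (0:ℝ), ENNReal.ofReal (t * Real.exp (-(t*b))) = ENNReal.ofReal (1/b^2) := by
  rw [← ofReal_integral_eq_lintegral_ofReal]
  · congr 1
    rw [← ltexp_val hb]
    exact setIntegral_congr_fun measurableSet_Ioi (fun t _ => by rw [mul_comm t b])
  · exact (ltexp_int hb).congr_fun (fun t _ => by simp only [mul_comm b t]) measurableSet_Ioi
  · refine (ae_restrict_iff' measurableSet_Ioi).2 (Filter.Eventually.of_forall fun t ht => ?_)
    have h0 : (0:ℝ) < t := ht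
    positivity

lemma linner_lint (a : ℝ) {t : ℝ} (ht : 0 < t) :
    ∫⁻ v : ℝ, ENNReal.ofReal ((1 - Real.cos (a*v)) * (t * Real.exp (-(t*|v|))))
      = ENNReal.ofReal (2*a^2/(t^2+a^2)) := by
  have hInt : Integrable (fun v : ℝ => (1 - Real.cos (a*v)) * (t * Real.exp (-(t*|v|)))) :=
    ((linner_int a ht).const_mul t).congr (Filter.Eventually.of_forall fun v => by ring)
  have hNN : 0 ≤ᵐ[volume] fun v : ℝ => (1 - Real.cos (a*v)) * (t * Real.exp (-(t*|v|))) := by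
    refine Filter.Eventually.of_forall fun v => ?_
    simp only [Pi.zero_apply]
    have h1 : Real.cos (a*v) ≤ 1 := Real.cos_le_one _
    have h2 : (0:ℝ) < Real.exp (-(t*|v|)) := Real.exp_pos _
    exact mul_nonneg (sub_nonneg.mpr h1) (mul_nonneg ht.le h2.le)
  rw [← ofReal_integral_eq_lintegral_ofReal hInt hNN]
  congr 1
  have h3 : (fun v : ℝ => (1 - Real.cos (a*v)) * (t * Real.exp (-(t*|v|))))
      = fun v : ℝ => t * ((1 - Real.cos (a*v)) * Real.exp (-(t*|v|))) := by
    funext v; ring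
  rw [h3, integral_const_mul, linner_val a ht]
  have hD : (0:ℝ) < t^2+a^2 := by positivity
  field_simp
  ring

lemma key_lemma (a : ℝ) :
    Integrable (fun v : ℝ => (1 - Real.cos (a*v)) / v^2) ∧
    ∫ v : ℝ, (1 - Real.cos (a*v)) / v^2 = Real.pi * |a| := by
  rcases eq_or_ne a 0 with rfl | ha
  · have h0 : (fun v : ℝ => (1 - Real.cos (0*v)) / v^2) = fun _ => (0:ℝ) := by
      funext v; simp
    rw [h0]
    refine ⟨integrable_zero _ _ _, by simp⟩
  have h0 : (0:ℝ) < |a| := abs_pos.mpr ha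
  -- outer integrand integrability and value
  have heq : ∀ t : ℝ, 2*a^2/(t^2+a^2) = 2 * (1 + (|a|⁻¹ * t)^2)⁻¹ := by
    intro t
    have ha2 : (0:ℝ) < a^2 := by positivity
    have hD : (0:ℝ) < t^2+a^2 := by positivity
    rw [mul_pow]
    field_simp [sq_abs]
    simp only [sq_abs]
    ring
  have houter_int : IntegrableOn (fun t : ℝ => 2*a^2/(t^2+a^2)) (Ioi (0:ℝ)) := by
    have h1 : Integrable (fun t : ℝ => 2 * (1 + (|a|⁻¹ * t)^2)⁻¹) :=
      (integrable_inv_one_add_sq.comp_mul_left' (inv_ne_zero h0.ne')).const_mul 2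
    exact (h1.congr (Filter.Eventually.of_forall fun t => (heq t).symm)).integrableOn
  have houter_val : ∫ t in Ioi (0:ℝ), 2*a^2/(t^2+a^2) = Real.pi * |a| := by
    have h1 : ∫ t in Ioi (0:ℝ), 2*a^2/(t^2+a^2)
        = ∫ t in Ioi (0:ℝ), (fun s => 2*(1+s^2)⁻¹) (|a|⁻¹ * t) :=
      setIntegral_congr_fun measurableSet_Ioi (fun t _ => heq t)
    have h2 := integral_comp_mul_left_Ioi (fun s => 2*(1+s^2)⁻¹) 0 (inv_pos.mpr h0)
    rw [h1, h2, mul_zero, inv_inv, integral_const_mul, integral_Ioi_inv_one_add_sq,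
      Real.arctan_zero, smul_eq_mul]
    ring
  -- Tonelli
  set f : ℝ → ℝ → ENNReal := fun v t =>
    ENNReal.ofReal ((1 - Real.cos (a*v)) * (t * Real.exp (-(t*|v|)))) with hfdef
  have hcont : Continuous (fun p : ℝ × ℝ =>
      (1 - Real.cos (a*p.1)) * (p.2 * Real.exp (-(p.2*|p.1|)))) := by
    fun_prop
  have hmeas : AEMeasurable (Function.uncurry f)
      ((volume : Measure ℝ).prod (volume.restrict (Ioi 0))) :=
    (ENNReal.continuous_ofReal.comp hcont).measurable.aemeasurable
  have hswap := MeasureTheory.lintegral_lintegral_swap hmeas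
  have h_ae : ∀ᵐ v : ℝ, v ≠ (0:ℝ) := by
    rw [ae_iff]
    simp only [not_not, Set.setOf_eq_eq_singleton]
    exact measure_singleton 0
  have hA : ∫⁻ v : ℝ, ENNReal.ofReal ((1 - Real.cos (a*v)) / v^2)
      = ∫⁻ v : ℝ, ∫⁻ t in Ioi (0:ℝ), f v t := by
    refine lintegral_congr_ae (h_ae.mono fun v hv => ?_)
    have hv2 : (0:ℝ) < |v| := abs_pos.mpr hv
    have hc : (0:ℝ) ≤ 1 - Real.cos (a*v) := sub_nonneg.mpr (Real.cos_le_one _)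
    have step : ∫⁻ t in Ioi (0:ℝ), f v t
        = ENNReal.ofReal (1 - Real.cos (a*v)) * ENNReal.ofReal (1/|v|^2) := by
      rw [hfdef]
      simp only
      rw [show (fun t : ℝ => ENNReal.ofReal ((1 - Real.cos (a*v)) * (t * Real.exp (-(t*|v|)))))
          = fun t : ℝ => ENNReal.ofReal (1 - Real.cos (a*v))
              * ENNReal.ofReal (t * Real.exp (-(t*|v|))) from
        funext fun t => ENNReal.ofReal_mul hc]
      rw [lintegral_const_mul' _ _ ENNReal.ofReal_ne_top, ltexp2 hv2]
    simp only
    rw [step, ← ENNReal.ofReal_mul hc, sq_abs, mul_one_div]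
  have hB : ∫⁻ t in Ioi (0:ℝ), ∫⁻ v : ℝ, f v t = ENNReal.ofReal (Real.pi * |a|) := by
    have hstep : ∫⁻ t in Ioi (0:ℝ), ∫⁻ v : ℝ, f v t
        = ∫⁻ t in Ioi (0:ℝ), ENNReal.ofReal (2*a^2/(t^2+a^2)) := by
      refine setLIntegral_congr_fun measurableSet_Ioi
        (fun t ht => ?_)
      exact linner_lint a ht
    have hNN : 0 ≤ᵐ[volume.restrict (Ioi (0:ℝ))] fun t : ℝ => 2*a^2/(t^2+a^2) := by
      refine Filter.Eventually.of_forall fun t => ?_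
      positivity
    rw [hstep, ← ofReal_integral_eq_lintegral_ofReal houter_int hNN, houter_val]
  have hmain : ∫⁻ v : ℝ, ENNReal.ofReal ((1 - Real.cos (a*v)) / v^2)
      = ENNReal.ofReal (Real.pi * |a|) := by
    rw [hA]
    exact hswap.trans hB
  have hnn : 0 ≤ᵐ[volume] fun v : ℝ => (1 - Real.cos (a*v)) / v^2 :=
    Filter.Eventually.of_forall fun v =>
      div_nonneg (sub_nonneg.mpr (Real.cos_le_one _)) (sq_nonneg v)
  have hsm : AEStronglyMeasurable (fun v : ℝ => (1 - Real.cos (a*v)) / v^2) volume := by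
    refine Measurable.aestronglyMeasurable ?_
    exact ((continuous_const.sub
      (Real.continuous_cos.comp (continuous_const.mul continuous_id))).measurable).div
      (measurable_id.pow_const 2)
  constructor
  · refine ⟨hsm, ?_⟩
    rw [hasFiniteIntegral_iff_ofReal hnn, hmain]
    exact ENNReal.ofReal_lt_top
  · rw [integral_eq_lintegral_of_nonneg_ae hnn hsm, hmain, ENNReal.toReal_ofReal (by positivity)]

/-- Empirical counterpart: for real numbers `x₁,…,x_n` with empirical characteristic
function `φ̂(v) = (1/n)∑ₜ e^{ivxₜ}`,
`(1/π) ∫_ℝ (1 − |φ̂(v)|²)/v² dv = (1/n²) ∑ₜ∑ₛ |xₜ − xₛ|`. -/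
theorem stmt_13 (n : ℕ) (hn : 1 ≤ n) (x : Fin n → ℝ) :
    (1 / Real.pi) * (∫ v : ℝ,
        (1 - (‖(1 / n : ℂ) * ∑ t, Complex.exp (Complex.I * ((v * x t : ℝ) : ℂ))‖) ^ 2)
          / v ^ 2)
      = (1 / (n : ℝ) ^ 2) * ∑ t, ∑ s, |x t - x s| := by
  have hne : (n:ℝ) ≠ 0 := Nat.cast_ne_zero.mpr (by omega)
  have hpt : ∀ v : ℝ,
      (1 - (‖(1 / n : ℂ) * ∑ t, Complex.exp (Complex.I * ((v * x t : ℝ) : ℂ))‖) ^ 2)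
          / v ^ 2
        = (1/(n:ℝ)^2) * ∑ t, ∑ s, (1 - Real.cos ((x t - x s) * v)) / v^2 := by
    intro v
    set S : ℂ := ∑ t, Complex.exp (Complex.I * ((v * x t : ℝ) : ℂ)) with hS
    have habs : (‖(1/(n:ℕ) : ℂ) * S‖)^2 = (1/(n:ℝ)^2) * (‖S‖)^2 := by
      rw [norm_mul, mul_pow]
      congr 1
      rw [norm_div, norm_one, Complex.norm_natCast, div_pow, one_pow]
    have hSsq : (‖S‖)^2 = ∑ t, ∑ s, Real.cos ((x t - x s) * v) := by
      rw [Complex.sq_norm]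
      have h1 : Complex.normSq S = (S * (starRingEnd ℂ) S).re := by
        rw [Complex.mul_conj, Complex.ofReal_re]
      rw [h1, hS, map_sum, Finset.sum_mul_sum, Complex.re_sum]
      refine Finset.sum_congr rfl fun t _ => ?_
      rw [Complex.re_sum]
      refine Finset.sum_congr rfl fun s _ => ?_
      rw [← Complex.exp_conj]
      have h2 : (starRingEnd ℂ) (Complex.I * ((v * x s : ℝ) : ℂ))
          = -(Complex.I * ((v * x s : ℝ) : ℂ)) := by
        rw [map_mul, Complex.conj_I, Complex.conj_ofReal]
        ring
      rw [h2, ← Complex.exp_add]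
      have harg : Complex.I * ((v * x t : ℝ) : ℂ) + -(Complex.I * ((v * x s : ℝ) : ℂ))
          = (((x t - x s) * v : ℝ) : ℂ) * Complex.I := by
        push_cast
        ring
      rw [harg, Complex.exp_ofReal_mul_I_re]
    rw [habs, hSsq]
    have hcard : ∑ _t : Fin n, ∑ _s : Fin n, (1:ℝ) = (n:ℝ)^2 := by
      simp [Finset.sum_const, Finset.card_univ]
      ring
    have h3 : 1 - 1/(n:ℝ)^2 * ∑ t, ∑ s, Real.cos ((x t - x s)*v)
        = (1/(n:ℝ)^2) * ∑ t, ∑ s, (1 - Real.cos ((x t - x s)*v)) := by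
      simp only [Finset.sum_sub_distrib]
      rw [hcard]
      have hn2 : ((n:ℝ)^2) ≠ 0 := pow_ne_zero 2 hne
      field_simp
      simp only [mul_comm v]
    rw [h3, mul_div_assoc]
    congr 1
    rw [Finset.sum_div]
    exact Finset.sum_congr rfl fun t _ => Finset.sum_div _ _ _
  have h1 : (∫ v : ℝ,
      (1 - (‖(1 / n : ℂ) * ∑ t, Complex.exp (Complex.I * ((v * x t : ℝ) : ℂ))‖) ^ 2)
        / v ^ 2)
      = ∫ v : ℝ, (1/(n:ℝ)^2) * ∑ t, ∑ s, (1 - Real.cos ((x t - x s) * v)) / v^2 :=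
    integral_congr_ae (Filter.Eventually.of_forall hpt)
  have h2 : ∫ v : ℝ, (1/(n:ℝ)^2) * ∑ t, ∑ s, (1 - Real.cos ((x t - x s) * v)) / v^2
      = (1/(n:ℝ)^2) * ∑ t, ∑ s, (Real.pi * |x t - x s|) := by
    rw [integral_const_mul]
    congr 1
    rw [integral_finset_sum _ (fun t _ => integrable_finset_sum _
      (fun s _ => (key_lemma (x t - x s)).1))]
    refine Finset.sum_congr rfl fun t _ => ?_
    rw [integral_finset_sum _ (fun s _ => (key_lemma (x t - x s)).1)]
    exact Finset.sum_congr rfl fun s _ => (key_lemma (x t - x s)).2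
  rw [h1, h2]
  have h4 : ∀ t : Fin n, ∑ s, Real.pi * |x t - x s| = Real.pi * ∑ s, |x t - x s| :=
    fun t => (Finset.mul_sum _ _ _).symm
  simp only [h4]
  rw [← Finset.mul_sum]
  have hπ : Real.pi ≠ 0 := Real.pi_ne_zero
  field_simp
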